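/- For positive integers k and n, the sum of mex(π)^k over partitions π of n with mex(π) even equals Σ_{m≥0} ((1−δ_m)(m+1)^k − δ_m m^k) p(n − m(m+1)/2), where δ_m = 1 if m is even and 0 otherwise, and p(j)=0 for j<0. -/
import Mathlib


open Finset

/-- The minimal excludant of a partition: the least positive integer not a part. -/
noncomputable def mex {n : ℕ} (π : Nat.Partition n) : ℕ :=
  sInf {m : ℕ | 0 < m ∧ m ∉ π.parts}

/-- Number of partitions of `n` with minimal excludant `m`. -/
noncomputable def pmex (m n : ℕ) : ℕ :=
  ((Finset.univ : Finset (Nat.Partition n)).filter (fun π => mex π = m)).card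

/-- The partition function, extended by `0` on negative integers. -/
noncomputable def pz (k : ℤ) : ℕ := if 0 ≤ k then Fintype.card (Nat.Partition k.toNat) else 0

/-- Number of partitions of `m` into distinct parts. -/
def qdist (m : ℕ) : ℕ := (Nat.Partition.distincts m).card

/-- A two-colored distinct-parts partition of `n`: a set of distinct (part, color)
pairs with positive parts summing to `n`. -/
def IsTCD (n : ℕ) (s : Finset (ℕ × Fin 2)) : Prop :=
  (∀ p ∈ s, 0 < p.1) ∧ ∑ p ∈ s, p.1 = n

noncomputable def D2 (n : ℕ) : ℕ := Set.ncard {s : Finset (ℕ × Fin 2) | IsTCD n s}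
noncomputable def D2e (n : ℕ) : ℕ :=
  Set.ncard {s : Finset (ℕ × Fin 2) | IsTCD n s ∧ Even s.card}
noncomputable def D2o (n : ℕ) : ℕ :=
  Set.ncard {s : Finset (ℕ × Fin 2) | IsTCD n s ∧ Odd s.card}

/- ### Auxiliary material -/

namespace MexAux

lemma gauss (m : ℕ) : (∑ i ∈ Finset.Icc 1 m, i) = m * (m + 1) / 2 := by
  induction m with
  | zero => simp
  | succ p ih =>
    have h : Finset.Icc 1 (p + 1) = insert (p + 1) (Finset.Icc 1 p) := by
      ext x; simp only [Finset.mem_Icc, Finset.mem_insert]; omega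
    rw [h, Finset.sum_insert (by simp), ih]
    have ha : p * (p + 1) % 2 = 0 := Nat.even_iff.mp (Nat.even_mul_succ_self p)
    have hb : (p + 1) * (p + 1 + 1) = p * (p + 1) + 2 * (p + 1) := by ring
    omega

/-- The multiset `{1, 2, ..., m}`. -/
def Sm (m : ℕ) : Multiset ℕ := (Finset.Icc 1 m).val

lemma Sm_sum (m : ℕ) : (Sm m).sum = m * (m + 1) / 2 := by
  have h : (Sm m).sum = ∑ i ∈ Finset.Icc 1 m, i := by
    rw [Finset.sum]; simp [Sm]
  rw [h, gauss]

lemma Sm_le {n : ℕ} (π : Nat.Partition n) (m : ℕ)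
    (h : ∀ i ∈ Finset.Icc 1 m, i ∈ π.parts) : Sm m ≤ π.parts := by
  rw [Multiset.le_iff_count]
  intro a
  by_cases ha : a ∈ Finset.Icc 1 m
  · have h1 : (Sm m).count a = 1 :=
      Multiset.count_eq_one_of_mem (Finset.Icc 1 m).nodup ha
    rw [h1]
    exact Multiset.one_le_count_iff_mem.2 (h a ha)
  · rw [Multiset.count_eq_zero_of_notMem (by simpa [Sm] using ha)]
    exact Nat.zero_le _

/-- Partitions of `n` containing each of `1, ..., m` as a part. -/
def Afs (n m : ℕ) : Finset (Nat.Partition n) :=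
  @Finset.filter _ (fun π => ∀ i ∈ Finset.Icc 1 m, i ∈ π.parts)
    (fun _ => Finset.decidableDforallFinset) Finset.univ

lemma mem_Afs {n m : ℕ} {π : Nat.Partition n} (hπ : π ∈ Afs n m) :
    ∀ i ∈ Finset.Icc 1 m, i ∈ π.parts := by
  rw [Afs, Finset.mem_filter] at hπ
  exact hπ.2

lemma sum_sub_of_mem {n m : ℕ} (π : Nat.Partition n) (hle : Sm m ≤ π.parts) :
    (π.parts - Sm m).sum + m * (m + 1) / 2 = n := by
  have hsplit : (π.parts - Sm m) + Sm m = π.parts := tsub_add_cancel_of_le hle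
  have h := congrArg Multiset.sum hsplit
  rw [Multiset.sum_add, Sm_sum, π.parts_sum] at h
  exact h

lemma Afs_card (n m : ℕ) :
    (Afs n m).card = pz ((n : ℤ) - (m * (m + 1) / 2 : ℕ)) := by
  by_cases h : m * (m + 1) / 2 ≤ n
  · have hpz : pz ((n : ℤ) - (m * (m + 1) / 2 : ℕ)) =
        Fintype.card (Nat.Partition (n - m * (m + 1) / 2)) := by
      have harg : (n : ℤ) - ((m * (m + 1) / 2 : ℕ) : ℤ) =
          ((n - m * (m + 1) / 2 : ℕ) : ℤ) := by omega
      rw [harg, pz, if_pos (Int.natCast_nonneg _), Int.toNat_natCast]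
    rw [hpz, ← Finset.card_univ]
    refine Finset.card_bij'
      (fun π hπ => (⟨π.parts - Sm m,
        by
          intro i hi
          exact π.parts_pos (Multiset.mem_of_le (Multiset.sub_le_self _ _) hi),
        by
          have hle : Sm m ≤ π.parts := Sm_le π m (mem_Afs hπ)
          have := sum_sub_of_mem π hle
          omega⟩ : Nat.Partition (n - m * (m + 1) / 2)))
      (fun σ _ => (⟨σ.parts + Sm m,
        by
          intro i hi
          rcases Multiset.mem_add.1 hi with hi | hi
          · exact σ.parts_pos hi
          · have h2 : i ∈ Finset.Icc 1 m := hi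
            have := Finset.mem_Icc.1 h2
            omega,
        by
          rw [Multiset.sum_add, Sm_sum, σ.parts_sum]
          omega⟩ : Nat.Partition n))
      (fun π hπ => Finset.mem_univ _)
      (fun σ hσ => by
        rw [Afs, Finset.mem_filter]
        exact ⟨Finset.mem_univ _, fun i hi => Multiset.mem_add.2 (Or.inr hi)⟩)
      (fun π hπ => Nat.Partition.ext
        (tsub_add_cancel_of_le (Sm_le π m (mem_Afs hπ))))
      (fun σ hσ => Nat.Partition.ext (add_tsub_cancel_right _ _))
  · have h1 : Afs n m = ∅ := by
      rw [Finset.eq_empty_iff_forall_notMem]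
      intro π hπ
      have hle : Sm m ≤ π.parts := Sm_le π m (mem_Afs hπ)
      have := sum_sub_of_mem π hle
      omega
    have h2 : pz ((n : ℤ) - (m * (m + 1) / 2 : ℕ)) = 0 := by
      have h0 : ¬ (0 : ℤ) ≤ (n : ℤ) - ((m * (m + 1) / 2 : ℕ) : ℤ) := by omega
      rw [pz, if_neg h0]
    rw [h1, h2, Finset.card_empty]

lemma mex_set_nonempty {n : ℕ} (π : Nat.Partition n) :
    {m : ℕ | 0 < m ∧ m ∉ π.parts}.Nonempty := by
  refine ⟨n + 1, Nat.succ_pos n, fun hmem => ?_⟩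
  have h : n + 1 ≤ π.parts.sum :=
    Multiset.single_le_sum (fun x _ => Nat.zero_le x) _ hmem
  rw [π.parts_sum] at h
  omega

lemma mex_le {n : ℕ} (π : Nat.Partition n) : mex π ≤ n + 1 := by
  refine Nat.sInf_le ⟨Nat.succ_pos n, fun hmem => ?_⟩
  have h : n + 1 ≤ π.parts.sum :=
    Multiset.single_le_sum (fun x _ => Nat.zero_le x) _ hmem
  rw [π.parts_sum] at h
  omega

lemma mex_spec {n : ℕ} (π : Nat.Partition n) :
    0 < mex π ∧ mex π ∉ π.parts :=
  Nat.sInf_mem (mex_set_nonempty π)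

lemma mem_of_lt_mex {n : ℕ} (π : Nat.Partition n) {i : ℕ} (h0 : 0 < i)
    (h : i < mex π) : i ∈ π.parts := by
  by_contra hi
  have h2 : sInf {m : ℕ | 0 < m ∧ m ∉ π.parts} ≤ i := Nat.sInf_le ⟨h0, hi⟩
  have h3 : mex π ≤ i := h2
  omega

lemma mex_eq_iff {n m : ℕ} (π : Nat.Partition n) (hm : 0 < m) :
    mex π = m ↔ (m ∉ π.parts ∧ ∀ i, 0 < i → i < m → i ∈ π.parts) := by
  constructor
  · rintro rfl
    exact ⟨(mex_spec π).2, fun i h0 h => mem_of_lt_mex π h0 h⟩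
  · rintro ⟨hnm, hall⟩
    have h1 : mex π ≤ m := Nat.sInf_le ⟨hm, hnm⟩
    have h2 : ¬ (mex π < m) := fun hlt => (mex_spec π).2 (hall _ (mex_spec π).1 hlt)
    omega

lemma card_split (n m : ℕ) (hm : 0 < m) :
    (Afs n (m - 1)).card = pmex m n + (Afs n m).card := by
  have key := Finset.card_filter_add_card_filter_not
    (s := Afs n (m - 1)) (p := fun π => m ∈ π.parts)
  have h1 : (Afs n (m - 1)).filter (fun π => m ∈ π.parts) = Afs n m := by
    ext π
    simp only [Afs, Finset.mem_filter, Finset.mem_univ, true_and, Finset.mem_Icc]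
    constructor
    · rintro ⟨hall, hmem⟩ i hi
      rcases eq_or_lt_of_le hi.2 with rfl | hlt
      · exact hmem
      · exact hall i ⟨hi.1, by omega⟩
    · intro hall
      exact ⟨fun i hi => hall i ⟨hi.1, by omega⟩, hall m ⟨hm, le_refl m⟩⟩
  have h2 : (Afs n (m - 1)).filter (fun π => ¬ m ∈ π.parts) =
      Finset.univ.filter (fun π : Nat.Partition n => mex π = m) := by
    ext π
    simp only [Afs, Finset.mem_filter, Finset.mem_univ, true_and, Finset.mem_Icc]
    rw [mex_eq_iff π hm]
    constructor
    · rintro ⟨hall, hnm⟩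
      exact ⟨hnm, fun i h0 hlt => hall i ⟨h0, by omega⟩⟩
    · rintro ⟨hnm, hall⟩
      exact ⟨fun i hi => hall i hi.1 (by omega), hnm⟩
  rw [h1, h2] at key
  rw [pmex]
  omega

end MexAux

open MexAux in
theorem kth_moment_even_mex (k n : ℕ) (hk : 0 < k) (hn : 0 < n) :
    ∑ π ∈ Finset.univ.filter (fun π : Nat.Partition n => Even (mex π)),
        (mex π : ℤ) ^ k =
      ∑ m ∈ Finset.range (n + 1),
        ((1 - if Even m then (1 : ℤ) else 0) * (m + 1) ^ k -
          (if Even m then (1 : ℤ) else 0) * m ^ k) *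
          pz ((n : ℤ) - (m * (m + 1) / 2 : ℕ)) := by
  classical
  set C : ℕ → ℤ := fun j => (pz ((n : ℤ) - (j * (j + 1) / 2 : ℕ)) : ℤ) with hC
  set s := Finset.univ.filter (fun π : Nat.Partition n => Even (mex π)) with hs
  -- Step 1: group LHS by value of mex
  have hmap : ∀ π ∈ s, mex π ∈ Finset.range (n + 2) := fun π _ =>
    Finset.mem_range.2 (by have := mex_le π; omega)
  have step1 : ∑ π ∈ s, (mex π : ℤ) ^ k =
      ∑ m ∈ Finset.range (n + 2),
        (if Even m then (m : ℤ) ^ k * pmex m n else 0) := by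
    rw [← Finset.sum_fiberwise_of_maps_to hmap (fun π => (mex π : ℤ) ^ k)]
    refine Finset.sum_congr rfl (fun m _ => ?_)
    have hfib : ∑ π ∈ s.filter (fun π => mex π = m), (mex π : ℤ) ^ k =
        (s.filter (fun π => mex π = m)).card • ((m : ℤ) ^ k) := by
      rw [← Finset.sum_const]
      refine Finset.sum_congr rfl (fun π hπ => ?_)
      rw [(Finset.mem_filter.1 hπ).2]
    rw [hfib]
    by_cases hEven : Even m
    · rw [if_pos hEven]
      have hset : s.filter (fun π => mex π = m) =
          Finset.univ.filter (fun π : Nat.Partition n => mex π = m) := by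
        ext π
        simp only [hs, Finset.filter_filter, Finset.mem_filter, Finset.mem_univ, true_and]
        constructor
        · exact fun h => h.2
        · intro h
          exact ⟨by rw [h]; exact hEven, h⟩
      rw [hset, ← pmex, nsmul_eq_mul, mul_comm]
    · rw [if_neg hEven]
      have hset : s.filter (fun π => mex π = m) = ∅ := by
        rw [Finset.eq_empty_iff_forall_notMem]
        intro π hπ
        simp only [hs, Finset.filter_filter, Finset.mem_filter] at hπ
        obtain ⟨-, heven, heq⟩ := hπ
        rw [heq] at heven
        exact hEven heven
      rw [hset, Finset.card_empty, zero_smul]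
  -- Step 2: pmex in terms of C
  have pmex_eq : ∀ m : ℕ, 0 < m → (pmex m n : ℤ) = C (m - 1) - C m := by
    intro m hm
    have hsplit := card_split n m hm
    have h1 := Afs_card n (m - 1)
    have h2 := Afs_card n m
    rw [h1, h2] at hsplit
    simp only [hC]
    omega
  -- Step 3: rewrite each summand
  have step3 : ∀ m ∈ Finset.range (n + 2),
      (if Even m then (m : ℤ) ^ k * pmex m n else 0) =
      (if Even m then (m : ℤ) ^ k else 0) * C (m - 1) -
        (if Even m then (m : ℤ) ^ k else 0) * C m := by
    intro m _
    by_cases hEven : Even m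
    · simp only [if_pos hEven]
      rcases Nat.eq_zero_or_pos m with rfl | hm
      · simp [zero_pow hk.ne']
      · rw [pmex_eq m hm]; ring
    · simp only [if_neg hEven]; ring
  rw [step1, Finset.sum_congr rfl step3, Finset.sum_sub_distrib]
  -- Step 4: telescoping
  have hClast : C (n + 1) = 0 := by
    have h2 : (n + 1) * 2 ≤ (n + 1) * (n + 1 + 1) :=
      Nat.mul_le_mul_left _ (by omega)
    have h3 : n + 1 ≤ (n + 1) * (n + 1 + 1) / 2 :=
      (Nat.le_div_iff_mul_le (by omega)).2 h2
    have h0 : ¬ (0 : ℤ) ≤ (n : ℤ) - (((n + 1) * (n + 1 + 1) / 2 : ℕ) : ℤ) := by omega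
    simp only [hC]
    rw [pz, if_neg h0]
    simp
  have hsum1 : ∑ m ∈ Finset.range (n + 2),
      (if Even m then (m : ℤ) ^ k else 0) * C (m - 1) =
      ∑ m ∈ Finset.range (n + 1),
        (if Even (m + 1) then ((m + 1 : ℕ) : ℤ) ^ k else 0) * C m := by
    rw [Finset.sum_range_succ']
    have h0 : (if Even 0 then ((0 : ℕ) : ℤ) ^ k else 0) * C (0 - 1) = 0 := by
      simp [zero_pow hk.ne']
    rw [h0, add_zero]
    refine Finset.sum_congr rfl (fun m _ => ?_)
    rw [Nat.add_sub_cancel]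
  have hsum2 : ∑ m ∈ Finset.range (n + 2),
      (if Even m then (m : ℤ) ^ k else 0) * C m =
      ∑ m ∈ Finset.range (n + 1),
        (if Even m then (m : ℤ) ^ k else 0) * C m := by
    rw [Finset.sum_range_succ, hClast, mul_zero, add_zero]
  rw [hsum1, hsum2, ← Finset.sum_sub_distrib]
  refine Finset.sum_congr rfl (fun m _ => ?_)
  by_cases hEven : Even m
  · have h1 : ¬ Even (m + 1) := by simp [Nat.even_add_one, hEven]
    simp only [if_neg h1, if_pos hEven]
    simp only [hC]
    ring
  · have h1 : Even (m + 1) := by simp [Nat.even_add_one, hEven]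
    simp only [if_pos h1, if_neg hEven]
    simp only [hC]
    push_cast
    ring
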